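/- Suppose a point x̂ ∈ ℝ^d satisfies: for every subset S of a finite set H with |H| = h ≥ n - f and |S| = n - f, x̂ is a minimizer of ∑_{i∈S} Q_i over ℝ^d. Then x̂ is a minimizer of ∑_{i∈H} Q_i over ℝ^d. -/

import Mathlib

open Finset

lemma count_subsets {ι : Type*} [DecidableEq ι] (H : Finset ι) (k : ℕ) (hk : 1 ≤ k)
    (a : ι) (ha : a ∈ H) :
    ((H.powersetCard k).filter (fun S => a ∈ S)).card = (H.card - 1).choose (k - 1) := by
  rw [show (#H - 1).choose (k-1) = #((H.erase a).powersetCard (k-1)) by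
      rw [card_powersetCard, card_erase_of_mem ha]]
  apply card_bij (fun S _ => S.erase a)
  · rintro S hS
    simp only [mem_filter, mem_powersetCard] at hS
    obtain ⟨⟨hsub, hcard⟩, haS⟩ := hS
    exact mem_powersetCard.2 ⟨erase_subset_erase _ hsub, by rw [card_erase_of_mem haS, hcard]⟩
  · rintro S hS T hT h
    simp only [mem_filter] at hS hT
    rw [← insert_erase hS.2, ← insert_erase hT.2, h]
  · rintro T hT
    rw [mem_powersetCard] at hT
    have haT : a ∉ T := fun h => (mem_erase.1 (hT.1 h)).1 rfl
    refine ⟨insert a T, ?_, erase_insert haT⟩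
    simp only [mem_filter, mem_powersetCard]
    refine ⟨⟨insert_subset ha (hT.1.trans (erase_subset _ _)), ?_⟩, mem_insert_self _ _⟩
    rw [card_insert_of_notMem haT, hT.2]
    omega

lemma key_sum {ι : Type*} [DecidableEq ι] (H : Finset ι) (k : ℕ) (hk : 1 ≤ k)
    (v : ι → ℝ) :
    ∑ S ∈ H.powersetCard k, ∑ i ∈ S, v i
      = ((H.card - 1).choose (k - 1) : ℝ) * ∑ i ∈ H, v i := by
  have : ∀ S ∈ H.powersetCard k, ∑ i ∈ S, v i = ∑ i ∈ H, if i ∈ S then v i else 0 := by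
    intro S hS
    rw [sum_ite_mem, inter_eq_right.2 (mem_powersetCard.1 hS).1]
  rw [sum_congr rfl this, Finset.sum_comm]
  rw [Finset.mul_sum]
  refine sum_congr rfl fun i hi => ?_
  rw [sum_ite, sum_const_zero, add_zero, sum_const, ← count_subsets H k hk i hi]
  simp [mul_comm]

theorem stmt_4 {ι : Type*} {d : ℕ} (H : Finset ι) (n f : ℕ)
    (hnf : 1 ≤ n - f) (hcard : n - f ≤ H.card)
    (Q : ι → EuclideanSpace ℝ (Fin d) → ℝ) (xhat : EuclideanSpace ℝ (Fin d))
    (hmin : ∀ S ⊆ H, S.card = n - f →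
      ∀ x : EuclideanSpace ℝ (Fin d), ∑ i ∈ S, Q i xhat ≤ ∑ i ∈ S, Q i x) :
    ∀ x : EuclideanSpace ℝ (Fin d), ∑ i ∈ H, Q i xhat ≤ ∑ i ∈ H, Q i x := by
  classical
  intro x
  set k := n - f with hk
  have hc : (0:ℝ) < ((H.card - 1).choose (k - 1) : ℝ) := by
    have : 0 < (H.card - 1).choose (k - 1) := Nat.choose_pos (by omega)
    exact_mod_cast this
  rw [← mul_le_mul_iff_right₀ hc, ← key_sum H k hnf, ← key_sum H k hnf]
  apply sum_le_sum
  intro S hS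
  rw [mem_powersetCard] at hS
  exact hmin S hS.1 hS.2 x
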